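/- Let S be a numerical semigroup with genus g(S), and let S_r = S ∪ {x_1, ..., x_r} where x_1 > ... > x_r are the r largest pseudo-Frobenius numbers of S. Then the conductor of S satisfies c(S) ≤ 2g(S) - r + 1. -/
import Mathlib


/-- A numerical semigroup: an additive submonoid of ℕ with finite complement. -/
structure NumSgp where
  carrier : Set ℕ
  zero_mem : 0 ∈ carrier
  add_mem : ∀ ⦃a b : ℕ⦄, a ∈ carrier → b ∈ carrier → a + b ∈ carrier
  cofinite : carrierᶜ.Finite

/-- The multiplicity: the smallest nonzero element. -/
noncomputable def NumSgp.mult (S : NumSgp) : ℕ := sInf {n | n ∈ S.carrier ∧ n ≠ 0}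

/-- The Apéry set of `S` with respect to `s`: elements `x ∈ S` with `x - s ∉ S`
(over the integers, i.e. there is no `y ∈ S` with `y + s = x`). -/
def NumSgp.Ap (S : NumSgp) (s : ℕ) : Set ℕ :=
  {x | x ∈ S.carrier ∧ ∀ y ∈ S.carrier, y + s ≠ x}

/-- `z` is an Arf element of `S`. -/
def NumSgp.ArfElem (S : NumSgp) (z : ℕ) : Prop :=
  ∀ x ∈ S.carrier, ∀ y ∈ S.carrier, z ≤ x → z ≤ y → x + y - z ∈ S.carrier

/-- The minimal generating set: nonzero elements not expressible as a sum of two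
nonzero elements of `S`. -/
def NumSgp.minGen (S : NumSgp) : Set ℕ :=
  {x | x ∈ S.carrier ∧ x ≠ 0 ∧ ∀ a ∈ S.carrier, ∀ b ∈ S.carrier, a ≠ 0 → b ≠ 0 → a + b ≠ x}

/-- The embedding dimension: the cardinality of the minimal generating set. -/
noncomputable def NumSgp.edim (S : NumSgp) : ℕ := S.minGen.ncard

/-- The Frobenius number: the largest gap. -/
noncomputable def NumSgp.frob (S : NumSgp) : ℕ := sSup S.carrierᶜ

/-- The conductor: the smallest `c` with `c + ℤ≥0 ⊆ S`. -/
noncomputable def NumSgp.cond (S : NumSgp) : ℕ := sInf {c | ∀ n, c ≤ n → n ∈ S.carrier}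

/-- The genus: the number of gaps. -/
noncomputable def NumSgp.genus (S : NumSgp) : ℕ := S.carrierᶜ.ncard

/-- The set of pseudo-Frobenius numbers. -/
def NumSgp.PF (S : NumSgp) : Set ℕ :=
  {x | x ∉ S.carrier ∧ ∀ s ∈ S.carrier, s ≠ 0 → x + s ∈ S.carrier}

/-- The type of `S`: the number of pseudo-Frobenius numbers. -/
noncomputable def NumSgp.type (S : NumSgp) : ℕ := S.PF.ncard

/-- `S` is a MED semigroup: its multiplicity is an Arf element, i.e. for all
`x, y ∈ S` with `x, y ≥ m(S)`, `x + y - m(S) ∈ S`. -/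
def NumSgp.IsMED (S : NumSgp) : Prop := S.ArfElem S.mult

/-- The MED closure of `S`: the intersection of all MED numerical semigroups
containing `S` with the same multiplicity. -/
def NumSgp.MEDclosure (S : NumSgp) : Set ℕ :=
  ⋂ T ∈ {T : NumSgp | S.carrier ⊆ T.carrier ∧ T.mult = S.mult ∧ T.IsMED}, T.carrier

theorem cond_le_two_genus_sub (S : NumSgp) (r : ℕ) (X : Finset ℕ)
    (hXPF : ↑X ⊆ S.PF) (hr : X.card = r) (hr1 : 1 ≤ r) (hrt : r ≤ S.PF.ncard)
    (htop : ∀ x ∈ X, ∀ y ∈ S.PF, y ∉ X → y < x) :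
    (S.cond : ℤ) ≤ 2 * S.genus - r + 1 := by
  classical
  have hTfin := S.cofinite
  set Tf : Finset ℕ := hTfin.toFinset with hTf
  -- X nonempty, so gaps nonempty
  have hXne : X.Nonempty := Finset.card_pos.mp (by omega)
  obtain ⟨x0, hx0⟩ := hXne
  have hx0PF : x0 ∈ S.PF := hXPF hx0
  have hTne : Tf.Nonempty := ⟨x0, by simpa [hTf, Set.Finite.mem_toFinset] using hx0PF.1⟩
  obtain ⟨F, hFmem, hFle⟩ : ∃ F, F ∈ Tf ∧ ∀ t ∈ Tf, t ≤ F :=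
    ⟨Tf.max' hTne, Tf.max'_mem hTne, fun t ht => Tf.le_max' t ht⟩
  have hFgap : F ∉ S.carrier := by
    simpa [hTf, Set.Finite.mem_toFinset] using hFmem
  have hgap_le : ∀ t, t ∉ S.carrier → t ≤ F := by
    intro t ht
    exact hFle t (by simpa [hTf, Set.Finite.mem_toFinset] using ht)
  have hbig : ∀ n, F + 1 ≤ n → n ∈ S.carrier := by
    intro n hn
    by_contra h
    have := hgap_le n h
    omega
  -- c ≤ F + 1
  have hcond : S.cond ≤ F + 1 := Nat.sInf_le hbig
  -- F ∈ PF
  have hFPF : F ∈ S.PF := by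
    refine ⟨hFgap, fun s hs hs0 => hbig _ (by omega)⟩
  -- F ∈ X
  have hFX : F ∈ X := by
    by_contra h
    have := htop x0 hx0 F hFPF h
    have := hgap_le x0 hx0PF.1
    omega
  -- for f ∈ PF, f ≠ F, F - f ∉ S
  have hPFcompl : ∀ f ∈ S.PF, f ≠ F → F - f ∉ S.carrier := by
    intro f hf hne hmem
    have hfle : f ≤ F := hgap_le f hf.1
    have h0 : F - f ≠ 0 := by omega
    have := hf.2 (F - f) hmem h0
    rw [show f + (F - f) = F by omega] at this
    exact hFgap this
  -- for i ∈ S, i ≤ F, F - i ∉ S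
  have hScompl : ∀ i ∈ S.carrier, i ≤ F → F - i ∉ S.carrier := by
    intro i hi hiF hmem
    have := S.add_mem hi hmem
    rw [show i + (F - i) = F by omega] at this
    exact hFgap this
  set A : Finset ℕ := (Finset.range (F + 1)).filter (· ∈ S.carrier) with hA
  set B : Finset ℕ := A.image (fun i => F - i) with hB
  have hBcard : B.card = A.card := by
    apply Finset.card_image_of_injOn
    intro i hi j hj hij
    simp only [hA, Finset.mem_coe, Finset.mem_filter, Finset.mem_range] at hi hj
    change F - i = F - j at hij
    omega
  have hBsub : B ⊆ Tf := by
    intro b hb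
    simp only [hB, Finset.mem_image] at hb
    obtain ⟨i, hi, rfl⟩ := hb
    simp only [hA, Finset.mem_filter, Finset.mem_range] at hi
    simpa [hTf, Set.Finite.mem_toFinset] using hScompl i hi.2 (by omega)
  set X' : Finset ℕ := X.erase F with hX'
  have hX'sub : X' ⊆ Tf := by
    intro f hf
    have hfX : f ∈ X := Finset.mem_of_mem_erase hf
    simpa [hTf, Set.Finite.mem_toFinset] using (hXPF hfX).1
  have hdisj : Disjoint B X' := by
    rw [Finset.disjoint_right]
    intro f hf hfB
    have hfX : f ∈ X := Finset.mem_of_mem_erase hf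
    have hfne : f ≠ F := Finset.ne_of_mem_erase hf
    simp only [hB, Finset.mem_image] at hfB
    obtain ⟨i, hi, rfl⟩ := hfB
    simp only [hA, Finset.mem_filter, Finset.mem_range] at hi
    have : F - (F - i) ∉ S.carrier := hPFcompl _ (hXPF hfX) hfne
    rw [show F - (F - i) = i by omega] at this
    exact this hi.2
  have hX'card : X'.card = r - 1 := by
    rw [hX', Finset.card_erase_of_mem hFX, hr]
  have hunion : (B ∪ X').card ≤ Tf.card := by
    exact Finset.card_le_card (Finset.union_subset hBsub hX'sub)
  rw [Finset.card_union_of_disjoint hdisj, hBcard, hX'card] at hunion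
  -- genus = Tf.card
  have hgenus : S.genus = Tf.card := by
    exact Set.ncard_eq_toFinset_card _ hTfin
  -- F + 1 = A.card + genus : range (F+1) splits into A and gaps
  have hgapsub : Tf ⊆ Finset.range (F + 1) := by
    intro t ht
    simp only [hTf, Set.Finite.mem_toFinset] at ht
    simp [Finset.mem_range]
    have := hgap_le t ht
    omega
  have hsplit : Finset.range (F + 1) = A ∪ Tf := by
    ext n
    simp only [Finset.mem_union, hA, Finset.mem_filter, hTf, Set.Finite.mem_toFinset,
      Finset.mem_range]
    constructor
    · intro hn
      by_cases h : n ∈ S.carrier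
      · exact Or.inl ⟨hn, h⟩
      · exact Or.inr h
    · rintro (⟨h, _⟩ | h)
      · exact h
      · have := hgap_le n h; omega
  have hAdisj : Disjoint A Tf := by
    rw [Finset.disjoint_left]
    intro n hn hn'
    simp only [hA, Finset.mem_filter] at hn
    simp only [hTf, Set.Finite.mem_toFinset] at hn'
    exact hn' hn.2
  have hcount : F + 1 = A.card + Tf.card := by
    have := Finset.card_union_of_disjoint hAdisj
    rw [← hsplit] at this
    simpa using this
  have h1 : 1 ≤ r := hr1
  rw [hgenus]
  have h2 : (S.cond : ℤ) ≤ F + 1 := by exact_mod_cast hcond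
  omega
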